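/- Let k be a field and S = k[x₁, …, xₙ]. Let M be a matroid on {1, …, n} with base family 𝓑, and let ℓ ≥ 0 be such that S_ℓ(𝓑) is nonempty. Then the ideal J_ℓ ⊆ S generated by the squarefree monomials { x_U = ∏_{i ∈ U} x_i : U ∈ S_ℓ(𝓑) } (the ideal generated by the ℓ-th multigraded shifts of the matroidal ideal of M) is a matroidal ideal: there exists a matroid M' on {1, …, n} with base family 𝓑' such that J_ℓ is the ideal generated by { x_D : D ∈ 𝓑' }. -/

import Mathlib

/-- Two sets are *adjacent* if each has exactly one element outside the other. -/
def AdjacentSets {α : Type*} (B C : Set α) : Prop :=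
  (B \ C).ncard = 1 ∧ (C \ B).ncard = 1

/-- The *adjacency family* of a family of sets: all unions of adjacent pairs of members. -/
def adjFam {α : Type*} (𝓕 : Set (Set α)) : Set (Set α) :=
  {U | ∃ B ∈ 𝓕, ∃ C ∈ 𝓕, AdjacentSets B C ∧ U = B ∪ C}

/-- For a family `𝓑` of subsets of `{1, …, n}` (ordered so that `i >_lex j ↔ i < j` as
integers) and `B ∈ 𝓑`, the set `set(B)` consists of all `e ∉ B` for which there exists
`t ∈ B` with `e >_lex t` (that is, `e < t`) and `(B \ {t}) ∪ {e} ∈ 𝓑`. -/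
def lexSet {n : ℕ} (𝓑 : Set (Set (Fin n))) (B : Set (Fin n)) : Set (Fin n) :=
  {e | e ∉ B ∧ ∃ t ∈ B, e < t ∧ insert e (B \ {t}) ∈ 𝓑}

/-- `S_ℓ(𝓑) = { B ∪ E : B ∈ 𝓑, E ⊆ set(B), |E| = ℓ }`, the family of supports of the
`ℓ`-th multigraded shifts of the matroidal ideal of `𝓑`. -/
def shiftFam {n : ℕ} (𝓑 : Set (Set (Fin n))) (ℓ : ℕ) : Set (Set (Fin n)) :=
  {U | ∃ B ∈ 𝓑, ∃ E, E ⊆ lexSet 𝓑 B ∧ E.ncard = ℓ ∧ U = B ∪ E}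

/-- The squarefree monomial `x_U = ∏_{i ∈ U} x_i` in `k[x₁, …, xₙ]` associated to a
subset `U ⊆ {1, …, n}`. -/
noncomputable def baseMonomial (k : Type*) [CommSemiring k] {n : ℕ} (U : Set (Fin n)) :
    MvPolynomial (Fin n) k :=
  ∏ i ∈ U.toFinite.toFinset, MvPolynomial.X i

namespace ShiftAux

open Set

variable {n : ℕ}

/-- Weight function: `2^i` summed over the set. -/
noncomputable def w (S : Set (Fin n)) : ℕ := ∑ i ∈ S.toFinite.toFinset, 2 ^ (i : ℕ)

lemma w_insert {e : Fin n} {S : Set (Fin n)} (he : e ∉ S) :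
    w (insert e S) = 2 ^ (e : ℕ) + w S := by
  have h : (insert e S).toFinite.toFinset = insert e S.toFinite.toFinset := by ext; simp
  rw [w, h, Finset.sum_insert (by simp [he]), w]

lemma w_diff {t : Fin n} {S : Set (Fin n)} (ht : t ∈ S) :
    w S = 2 ^ (t : ℕ) + w (S \ {t}) := by
  have h : (S \ {t}).toFinite.toFinset = S.toFinite.toFinset.erase t := by
    ext; simp [and_comm]
  rw [w, w, h]
  exact (Finset.add_sum_erase _ _ (show t ∈ S.toFinite.toFinset by simp [ht])).symm

lemma w_exchange {e t : Fin n} {S : Set (Fin n)} (he : e ∉ S) (ht : t ∈ S) :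
    w (insert e (S \ {t})) + 2 ^ (t : ℕ) = w S + 2 ^ (e : ℕ) := by
  rw [w_insert (fun h => he h.1), w_diff ht]; ring

/-- If `B` is a base, `e ∉ B` is not a loop, then some exchange into `B` is possible. -/
lemma exists_exchange {α : Type*} {M : Matroid α} {B : Set α} {e : α}
    (hB : M.IsBase B) (heE : e ∈ M.E) (heI : M.Indep {e}) (heB : e ∉ B) :
    ∃ t ∈ B, M.IsBase (insert e (B \ {t})) := by
  obtain ⟨J, hJ, heJ⟩ := heI.subset_isBasis_of_subset
    (singleton_subset_iff.2 (mem_insert e B)) (insert_subset heE hB.subset_ground)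
  have heJ' : e ∈ J := heJ rfl
  have hJbase : M.IsBase J := by
    refine hJ.indep.isBase_of_spanning ?_
    rw [Matroid.spanning_iff_closure_eq hJ.indep.subset_ground]
    refine (M.closure_subset_ground J).antisymm ?_
    have hBcl : B ⊆ M.closure J := (subset_insert e B).trans hJ.subset_closure
    calc M.E = M.closure B := hB.spanning.closure_eq.symm
      _ ⊆ M.closure (M.closure J) := M.closure_subset_closure hBcl
      _ = M.closure J := M.closure_closure J
  have hJB : J \ B = {e} := by
    apply Subset.antisymm
    · intro x hx
      rcases hJ.subset hx.1 with h | h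
      · exact h
      · exact absurd h hx.2
    · exact singleton_subset_iff.2 ⟨heJ', heB⟩
  have hBJ : (B \ J).encard = 1 := by
    rw [hB.encard_diff_comm hJbase, hJB, encard_singleton]
  obtain ⟨t, ht⟩ := encard_eq_one.1 hBJ
  have htB : t ∈ B := (ht ▸ (rfl : t ∈ ({t} : Set α)) : t ∈ B \ J).1
  have htJ : t ∉ J := (show t ∈ B \ J from ht ▸ rfl).2
  refine ⟨t, htB, ?_⟩
  have hJeq : insert e (B \ {t}) = J := by
    ext x
    constructor
    · rintro (rfl | ⟨hxB, hxt⟩)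
      · exact heJ'
      · by_contra hxJ
        have : x ∈ B \ J := ⟨hxB, hxJ⟩
        rw [ht] at this
        exact hxt this
    · intro hxJ
      rcases hJ.subset hxJ with h | h
      · exact Or.inl h
      · refine Or.inr ⟨h, ?_⟩
        rintro rfl
        exact htJ hxJ
  rw [hJeq]
  exact hJbase

/-- The characterization of the members of `shiftFam`: loop-free spanning sets of
cardinality `rank + ℓ`. -/
def Good (M : Matroid (Fin n)) (ℓ : ℕ) (U : Set (Fin n)) : Prop :=
  M.Spanning U ∧ (∀ e ∈ U, M.Indep {e}) ∧ ∃ B, M.IsBase B ∧ U.encard = B.encard + ℓ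

lemma good_exchange {M : Matroid (Fin n)} (hE : M.E = univ) (ℓ : ℕ) :
    Matroid.ExchangeProperty (Good M ℓ) := by
  intro B₁ B₂ h₁ h₂ e he
  obtain ⟨h₁s, h₁l, B, hB, h₁c⟩ := h₁
  obtain ⟨h₂s, h₂l, B', hB', h₂c⟩ := h₂
  have hcard : B₁.encard = B₂.encard := by
    rw [h₁c, h₂c, hB.encard_eq_encard_of_isBase hB']
  have hne : (B₂ \ B₁).Nonempty := by
    rw [nonempty_iff_ne_empty]
    intro h
    have hsub : B₂ ⊆ B₁ := diff_eq_empty.1 h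
    have : B₂ = B₁ := B₂.toFinite.eq_of_subset_of_encard_le hsub hcard.le
    exact he.2 (this ▸ he.1)
  have key : ∀ f ∈ B₂ \ B₁, M.Spanning (insert f (B₁ \ {e})) →
      Good M ℓ (insert f (B₁ \ {e})) := by
    intro f hf hsp
    refine ⟨hsp, ?_, B, hB, ?_⟩
    · rintro x hx
      rcases mem_insert_iff.1 hx with rfl | hx
      · exact h₂l x hf.1
      · exact h₁l x hx.1
    · rw [encard_exchange hf.2 he.1, h₁c]
  by_cases hsp : M.Spanning (B₁ \ {e})
  · obtain ⟨f, hf⟩ := hne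
    exact ⟨f, hf, key f hf (hsp.superset (subset_insert _ _) (by simp [hE]))⟩
  · have hcl : ¬ B₂ ⊆ M.closure (B₁ \ {e}) := by
      intro hsub
      apply hsp
      rw [Matroid.spanning_iff_closure_eq (by simp [hE])]
      have h' := h₂s.closure_eq_of_superset hsub
      rwa [M.closure_closure] at h'
    obtain ⟨f, hfB₂, hfcl⟩ := not_subset.1 hcl
    have hfe : f ≠ e := by rintro rfl; exact he.2 hfB₂
    have hfB₁ : f ∉ B₁ := by
      intro h
      exact hfcl (M.subset_closure (B₁ \ {e}) (by simp [hE]) ⟨h, hfe⟩)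
    refine ⟨f, ⟨hfB₂, hfB₁⟩, key f ⟨hfB₂, hfB₁⟩ ?_⟩
    have hins : insert e (B₁ \ {e}) = B₁ := by
      rw [insert_diff_singleton, insert_eq_self.2 he.1]
    have hfmem : f ∈ M.closure (insert e (B₁ \ {e})) \ M.closure (B₁ \ {e}) := by
      rw [hins, h₁s.closure_eq]
      exact ⟨by simp [hE], hfcl⟩
    have hex := Matroid.closure_exchange hfmem
    rw [Matroid.spanning_iff_closure_eq (by simp [hE])]
    refine (M.closure_subset_ground _).antisymm ?_
    have hB₁sub : B₁ ⊆ M.closure (insert f (B₁ \ {e})) := by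
      intro x hx
      by_cases hxe : x = e
      · exact hxe ▸ hex.1
      · exact M.subset_closure _ (by simp [hE]) (mem_insert_of_mem _ ⟨hx, hxe⟩)
    calc M.E = M.closure B₁ := h₁s.closure_eq.symm
      _ ⊆ M.closure (M.closure (insert f (B₁ \ {e}))) := M.closure_subset_closure hB₁sub
      _ = M.closure (insert f (B₁ \ {e})) := M.closure_closure _

lemma shift_good {M : Matroid (Fin n)} (hE : M.E = univ) {ℓ : ℕ} {U : Set (Fin n)}
    (hU : U ∈ shiftFam {B | M.IsBase B} ℓ) : Good M ℓ U := by
  obtain ⟨B, hB, E, hEsub, hEcard, rfl⟩ := hU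
  have hB' : M.IsBase B := hB
  have hdisj : Disjoint B E := by
    rw [disjoint_comm, disjoint_left]
    intro e heE
    exact (hEsub heE).1
  refine ⟨hB'.spanning.superset subset_union_left (by simp [hE]), ?_, B, hB', ?_⟩
  · intro x hx
    rcases hx with hx | hx
    · exact hB'.indep.subset (singleton_subset_iff.2 hx)
    · obtain ⟨hxB, t, htB, hlt, hbase⟩ := hEsub hx
      exact (hbase : M.IsBase _).indep.subset (singleton_subset_iff.2 (mem_insert _ _))
  · rw [encard_union_eq hdisj, ← hEcard, E.toFinite.cast_ncard_eq]

lemma good_shift {M : Matroid (Fin n)} (hE : M.E = univ) {ℓ : ℕ} {U : Set (Fin n)}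
    (hU : Good M ℓ U) : U ∈ shiftFam {B | M.IsBase B} ℓ := by
  obtain ⟨hsp, hloop, B', hB', hc⟩ := hU
  have hne : {B | M.IsBase B ∧ B ⊆ U}.Nonempty := by
    obtain ⟨B₀, hB₀, hB₀U⟩ := hsp.exists_isBase_subset
    exact ⟨B₀, hB₀, hB₀U⟩
  obtain ⟨B, hB𝒮, hmax⟩ := Set.exists_max_image {B | M.IsBase B ∧ B ⊆ U} w (Set.toFinite _) hne
  obtain ⟨hB, hBU⟩ := hB𝒮
  have hkey : U \ B ⊆ lexSet {B | M.IsBase B} B := by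
    intro e heUB
    obtain ⟨heU, heB⟩ := heUB
    obtain ⟨t, htB, hbase⟩ := exists_exchange hB (by simp [hE]) (hloop e heU) heB
    refine ⟨heB, t, htB, ?_, hbase⟩
    rcases lt_trichotomy e t with h | h | h
    · exact h
    · exact absurd h (by rintro rfl; exact heB htB)
    · exfalso
      have hmem : insert e (B \ {t}) ∈ {B | M.IsBase B ∧ B ⊆ U} :=
        ⟨hbase, insert_subset heU (diff_subset.trans hBU)⟩
      have hle := hmax _ hmem
      have hw := w_exchange heB htB
      have hpow : 2 ^ (t : ℕ) < 2 ^ (e : ℕ) :=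
        Nat.pow_lt_pow_right (by norm_num) h
      omega
  have hBB' : B.encard = B'.encard := hB.encard_eq_encard_of_isBase hB'
  have hEcard : (U \ B).ncard = ℓ := by
    have h1 : (U \ B).encard + B.encard = U.encard := encard_diff_add_encard_of_subset hBU
    rw [hc, ← hBB'] at h1
    have h2 : (U \ B).encard = (ℓ : ℕ∞) := by
      have hfin : B.encard ≠ ⊤ := B.toFinite.encard_lt_top.ne
      have h3 : (U \ B).encard + B.encard = (ℓ : ℕ∞) + B.encard := by
        rw [h1, add_comm]
      exact WithTop.add_right_cancel hfin h3
    rw [← (U \ B).toFinite.cast_ncard_eq] at h2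
    exact_mod_cast h2
  exact ⟨B, hB, U \ B, hkey, hEcard, (union_diff_cancel hBU).symm⟩

end ShiftAux

/-- Let `k` be a field and `S = k[x₁, …, xₙ]`.  Let `M` be a matroid on
`{1, …, n}` with base family `𝓑`, and let `ℓ ≥ 0` be such that `S_ℓ(𝓑)` is nonempty.
Then the ideal `J_ℓ ⊆ S` generated by the squarefree monomials
`{ x_U : U ∈ S_ℓ(𝓑) }` (the ideal generated by the `ℓ`-th multigraded shifts of the
matroidal ideal of `M`) is a matroidal ideal: there is a matroid `M'` on `{1, …, n}`
with base family `𝓑'` such that `J_ℓ` is the ideal generated by `{ x_D : D ∈ 𝓑' }`. -/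
theorem multigraded_shift_ideal_matroidal (k : Type*) [Field k] {n : ℕ}
    (M : Matroid (Fin n)) (hE : M.E = Set.univ)
    (𝓑 : Set (Set (Fin n))) (h𝓑 : 𝓑 = {B | M.IsBase B})
    (ℓ : ℕ) (hne : (shiftFam 𝓑 ℓ).Nonempty)
    (J : Ideal (MvPolynomial (Fin n) k))
    (hJ : J = Ideal.span {p | ∃ U ∈ shiftFam 𝓑 ℓ, p = baseMonomial k U}) :
    ∃ M' : Matroid (Fin n), M'.E = Set.univ ∧
      J = Ideal.span {p | ∃ D ∈ {B | M'.IsBase B}, p = baseMonomial k D} := by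
  subst h𝓑
  subst hJ
  have hiff : ∀ U, U ∈ shiftFam {B | M.IsBase B} ℓ ↔ ShiftAux.Good M ℓ U :=
    fun U => ⟨ShiftAux.shift_good hE, ShiftAux.good_shift hE⟩
  have hexch : Matroid.ExchangeProperty (· ∈ shiftFam {B | M.IsBase B} ℓ) := by
    intro X Y hX hY a ha
    obtain ⟨b, hb, hgood⟩ :=
      ShiftAux.good_exchange hE ℓ X Y ((hiff X).1 hX) ((hiff Y).1 hY) a ha
    exact ⟨b, hb, (hiff _).2 hgood⟩
  refine ⟨Matroid.ofIsBaseOfFinite Set.finite_univ (· ∈ shiftFam {B | M.IsBase B} ℓ)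
      hne hexch (fun B _ => Set.subset_univ B), rfl, ?_⟩
  rfl
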